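/- Let p, v, t, θ be real numbers with p > 1, v > 1, t > 0 and 0 < θ < π/2; set τ = tan θ and K = (1 + τ^p)^(−1/p) (real powers), and let q0 = (t·K, t·τ·K). Then for every γ ∈ [0, v·t], any point (x, y) ∈ ℝ² satisfying x ≥ γ, y = (x − γ)·τ and (x − γ)^p + y^p = (t − γ/v)^p lies on the segment joining q0 and (v·t, 0); explicitly, (x, y) = (1 − γ/(v·t)) • q0 + (γ/(v·t)) • (v·t, 0). -/
import Mathlib


open Real

/-- For fixed direction `θ`, the points `q(γ,θ)` on the wavefront circles emitted
along the highway are collinear: each lies on the segment joining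
`q0 = (t·K, t·τ·K)` and `(v·t, 0)`, with the explicit convex-combination formula. -/
theorem stmt_8 (p v t θ : ℝ) (hp : 1 < p) (hv : 1 < v) (ht : 0 < t)
    (hθ0 : 0 < θ) (hθ1 : θ < π / 2) :
    let τ : ℝ := Real.tan θ
    let K : ℝ := (1 + τ ^ p) ^ (-1 / p)
    let q0 : ℝ × ℝ := (t * K, t * τ * K)
    ∀ γ ∈ Set.Icc (0:ℝ) (v * t), ∀ x y : ℝ,
      x ≥ γ → y = (x - γ) * τ → (x - γ) ^ p + y ^ p = (t - γ / v) ^ p →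
      (x, y) = (1 - γ / (v * t)) • q0 + (γ / (v * t)) • ((v * t, 0) : ℝ × ℝ) := by
  intro τ K q0 γ hγ x y hx hy heq
  have hv0 : (0:ℝ) < v := lt_trans one_pos hv
  have hτ : 0 < τ := Real.tan_pos_of_pos_of_lt_pi_div_two hθ0 hθ1
  have hp0 : p ≠ 0 := by positivity
  have hA : (0:ℝ) < 1 + τ ^ p := by positivity
  have hK : (0:ℝ) < K := Real.rpow_pos_of_pos hA _
  have hs : 0 ≤ x - γ := by linarith
  have hr : 0 ≤ t - γ / v := by
    rw [sub_nonneg, div_le_iff₀ hv0]; linarith [hγ.2]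
  have hKp : K ^ p = (1 + τ ^ p)⁻¹ := by
    rw [show K = (1 + τ ^ p) ^ (-1 / p) from rfl, ← Real.rpow_mul hA.le]
    rw [show -1 / p * p = -1 by field_simp, Real.rpow_neg_one]
  -- key: x - γ = (t - γ/v) * K
  have key : x - γ = (t - γ / v) * K := by
    apply Real.rpow_left_injOn hp0 (by exact hs) (by exact mul_nonneg hr hK.le)
    simp only
    rw [Real.mul_rpow hr hK.le, hKp, eq_mul_inv_iff_mul_eq₀ hA.ne']
    rw [hy, Real.mul_rpow hs hτ.le] at heq
    linear_combination heq
  have hxv : x = γ + (t - γ / v) * K := by linarith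
  have hyv : y = (t - γ / v) * K * τ := by rw [hy, key]
  have hvt : v * t ≠ 0 := by positivity
  rw [hxv, hyv, Prod.ext_iff]
  constructor <;> simp [Prod.smul_def, q0] <;> field_simp <;> ring
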